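/- Let G be a group with an ascending series of characteristic subgroups with abelian factors. Then G contains a characteristic subgroup U which is nilpotent of class at most two and satisfies C_G(U) = ζ(U), the center of U. -/

import Mathlib

open Order
open scoped Pointwise
open scoped commutatorElement

private theorem commutator_mul_mul_aux {G : Type*} [Group G] {v k v' k' : G}
    (h1 : Commute v k) (h2 : Commute v k') (h3 : Commute v' k) (h4 : Commute v' k') :
    ⁅v * k, v' * k'⁆ = ⁅v, v'⁆ * ⁅k, k'⁆ := by
  have eA : (v * k) * (v' * k') = (v * v') * (k * k') := h3.symm.mul_mul_mul_comm v k'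
  have eB : (v * k)⁻¹ * (v' * k')⁻¹ = (v⁻¹ * v'⁻¹) * (k⁻¹ * k'⁻¹) := by
    rw [mul_inv_rev, mul_inv_rev, ← h1.inv_inv.eq, ← h4.inv_inv.eq]
    exact h3.symm.inv_inv.mul_mul_mul_comm v⁻¹ k'⁻¹
  have cQR : Commute (k * k') (v⁻¹ * v'⁻¹) :=
    ((h1.symm.inv_right).mul_right (h3.symm.inv_right)).mul_left
      ((h2.symm.inv_right).mul_right (h4.symm.inv_right))
  calc ⁅v * k, v' * k'⁆
      = ((v * k) * (v' * k')) * ((v * k)⁻¹ * (v' * k')⁻¹) := by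
        rw [commutatorElement_def, mul_assoc]
    _ = ((v * v') * (k * k')) * ((v⁻¹ * v'⁻¹) * (k⁻¹ * k'⁻¹)) := by rw [eA, eB]
    _ = ((v * v') * (v⁻¹ * v'⁻¹)) * ((k * k') * (k⁻¹ * k'⁻¹)) :=
        cQR.mul_mul_mul_comm (v * v') (k⁻¹ * k'⁻¹)
    _ = ⁅v, v'⁆ * ⁅k, k'⁆ := by
        rw [commutatorElement_def, commutatorElement_def]
        group

/-- (Hartley) If a group `G` has an ascending series of characteristic subgroups with
abelian factors, then `G` contains a characteristic subgroup `U`, nilpotent of class at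
most two, with `C_G(U) = ζ(U)`. -/
theorem stmt_15 {G : Type*} [Group G] (l : Ordinal) (s : Ordinal → Subgroup G)
    (hmono : Monotone s) (h0 : s 0 = ⊥) (htop : s l = ⊤)
    (hchar : ∀ o : Ordinal, (s o).Characteristic)
    -- abelian factors: `s (o+1) / s o` is abelian
    (hab : ∀ o : Ordinal, ⁅s (o + 1), s (o + 1)⁆ ≤ s o)
    -- continuity at limit ordinals
    (hlim : ∀ o : Ordinal, Order.IsSuccLimit o → s o = ⨆ (o' : Ordinal) (_ : o' < o), s o') :
    ∃ U : Subgroup G, U.Characteristic ∧ lowerCentralSeries U 2 = ⊥ ∧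
      Subgroup.centralizer (U : Set G) = U ⊓ Subgroup.centralizer (U : Set G) := by
  classical
  -- The family of characteristic subgroups `V` with `⁅V,V⁆` centralizing `V`
  -- (i.e. nilpotent of class at most two, elementwise version).
  set F : Set (Subgroup G) :=
    {V | V.Characteristic ∧ ∀ x ∈ V, ∀ y ∈ V, ⁅x, y⁆ ∈ Subgroup.centralizer (V : Set G)}
    with hFdef
  have hbot : (⊥ : Subgroup G) ∈ F := by
    refine ⟨inferInstance, ?_⟩
    intro x hx y hy
    rw [Subgroup.mem_bot] at hx hy
    subst hx; subst hy
    have h1 : ⁅(1 : G), (1 : G)⁆ = 1 := by group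
    rw [h1]
    exact Subgroup.one_mem _
  -- Zorn's lemma
  obtain ⟨V, -, hVF, hVmax⟩ : ∃ V, ⊥ ≤ V ∧ Maximal (· ∈ F) V := by
    refine zorn_le_nonempty₀ F ?_ ⊥ hbot
    intro c hcF hc y hy
    refine ⟨sSup c, ⟨?_, ?_⟩, fun z hz => le_sSup hz⟩
    · -- characteristic
      refine Subgroup.characteristic_iff_map_le.mpr fun φ => ?_
      intro x hx
      obtain ⟨g, hg, rfl⟩ := Subgroup.mem_map.mp hx
      obtain ⟨W, hWc, hgW⟩ := (Subgroup.mem_sSup_of_directedOn ⟨y, hy⟩ hc.directedOn).mp hg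
      have hW : W.Characteristic := (hcF hWc).1
      have : φ g ∈ W := Subgroup.characteristic_iff_map_le.mp hW φ ⟨g, hgW, rfl⟩
      exact le_sSup hWc this
    · -- commutators central
      intro x hx y' hy'
      rw [Subgroup.mem_centralizer_iff]
      intro z hz
      obtain ⟨Wx, hWx, hxW⟩ := (Subgroup.mem_sSup_of_directedOn ⟨y, hy⟩ hc.directedOn).mp hx
      obtain ⟨Wy, hWy, hyW⟩ := (Subgroup.mem_sSup_of_directedOn ⟨y, hy⟩ hc.directedOn).mp hy'
      obtain ⟨Wz, hWz, hzW⟩ := (Subgroup.mem_sSup_of_directedOn ⟨y, hy⟩ hc.directedOn).mp hz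
      obtain ⟨W1, hW1, hx1, hy1⟩ := hc.directedOn Wx hWx Wy hWy
      obtain ⟨W, hW, h1W, hzW'⟩ := hc.directedOn W1 hW1 Wz hWz
      exact Subgroup.mem_centralizer_iff.mp
        ((hcF hW).2 x (h1W (hx1 hxW)) y' (h1W (hy1 hyW))) z (hzW' hzW)
  have hVchar : V.Characteristic := hVF.1
  have hV2 : ∀ x ∈ V, ∀ y ∈ V, ⁅x, y⁆ ∈ Subgroup.centralizer (V : Set G) := hVF.2
  haveI := hVchar
  set D : Subgroup G := Subgroup.centralizer (V : Set G) with hDdef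
  -- main claim: the centralizer of V is contained in V
  have hDV : D ≤ V := by
    by_contra hDV
    set S : Set Ordinal := {α | ¬ (s α ⊓ D ≤ V)} with hSdef
    have hlS : l ∈ S := by
      show ¬ (s l ⊓ D ≤ V)
      rw [htop, top_inf_eq]
      exact hDV
    set α : Ordinal := Ordinal.lt_wf.min S ⟨l, hlS⟩ with hαdef
    have hαS : α ∈ S := Ordinal.lt_wf.min_mem S ⟨l, hlS⟩
    have hmin : ∀ β < α, s β ⊓ D ≤ V := by
      intro β hβ
      by_contra hβS
      exact Ordinal.lt_wf.not_lt_min S hβS hβ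
    rcases Ordinal.zero_or_succ_or_isSuccLimit α with h0' | ⟨β, hβ⟩ | hL
    · refine hαS ?_
      rw [h0', h0]
      exact le_trans inf_le_left bot_le
    · -- successor case
      have hβα : β < α := hβ ▸ Order.lt_succ β
      have hβV : s β ⊓ D ≤ V := hmin β hβα
      have hK : ¬ (s (β + 1) ⊓ D ≤ V) := by
        rw [Ordinal.add_one_eq_succ, hβ]
        exact hαS
      set K : Subgroup G := s (β + 1) ⊓ D with hKdef
      set M : Subgroup G := V ⊔ K with hMdef
      -- elements of K commute with elements of V
      have hcomm : ∀ k ∈ K, ∀ v ∈ V, Commute v k := fun k hk v hv =>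
        Subgroup.mem_centralizer_iff.mp hk.2 v hv
      -- commutators of K lie in V ⊓ D
      have hKK : ∀ k ∈ K, ∀ k' ∈ K, ⁅k, k'⁆ ∈ V ⊓ D := by
        intro k hk k' hk'
        have hD' : ⁅k, k'⁆ ∈ D := by
          rw [commutatorElement_def]
          exact D.mul_mem (D.mul_mem (D.mul_mem hk.2 hk'.2) (D.inv_mem hk.2)) (D.inv_mem hk'.2)
        exact ⟨hβV ⟨hab β (Subgroup.commutator_mem_commutator hk.1 hk'.1), hD'⟩, hD'⟩
      have hVV : ∀ v ∈ V, ∀ v' ∈ V, ⁅v, v'⁆ ∈ V := by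
        intro v hv v' hv'
        rw [commutatorElement_def]
        exact V.mul_mem (V.mul_mem (V.mul_mem hv hv') (V.inv_mem hv)) (V.inv_mem hv')
      -- decomposition of elements of M
      have hdecomp : ∀ w ∈ M, ∃ v ∈ V, ∃ k ∈ K, w = v * k := by
        intro w hw
        have : w ∈ (V : Set G) * (K : Set G) := by
          classical
          rw [← Subgroup.normal_mul]
          exact hw
        obtain ⟨v, hv, k, hk, hvk⟩ := this
        exact ⟨v, hv, k, hk, hvk.symm⟩
      -- M belongs to the family F
      have hMF : M ∈ F := by
        constructor
        · -- characteristic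
          refine Subgroup.characteristic_iff_map_le.mpr fun φ => ?_
          rw [Subgroup.map_sup]
          refine sup_le ((Subgroup.characteristic_iff_map_le.mp hVchar φ).trans le_sup_left) ?_
          intro x hx
          obtain ⟨g, hg, rfl⟩ := Subgroup.mem_map.mp hx
          refine Subgroup.mem_sup_right (show φ g ∈ K from ⟨?_, ?_⟩)
          · exact Subgroup.characteristic_iff_map_le.mp (hchar (β + 1)) φ ⟨g, hg.1, rfl⟩
          · haveI : D.Characteristic := by rw [hDdef]; infer_instance
            exact Subgroup.characteristic_iff_map_le.mp this φ ⟨g, hg.2, rfl⟩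
        · -- commutators centralize M
          intro x hx y hy
          rw [Subgroup.mem_centralizer_iff]
          intro z hz
          obtain ⟨v, hv, k, hk, rfl⟩ := hdecomp x hx
          obtain ⟨v', hv', k', hk', rfl⟩ := hdecomp y hy
          obtain ⟨v'', hv'', k'', hk'', rfl⟩ := hdecomp z hz
          rw [commutator_mul_mul_aux (hcomm k hk v hv) (hcomm k' hk' v hv)
            (hcomm k hk v' hv') (hcomm k' hk' v' hv')]
          have hc1V : ⁅v, v'⁆ ∈ V := hVV v hv v' hv'
          have hc2 : ⁅k, k'⁆ ∈ V ⊓ D := hKK k hk k' hk'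
          have c1a : Commute v'' ⁅v, v'⁆ :=
            Subgroup.mem_centralizer_iff.mp (hV2 v hv v' hv') v'' hv''
          have c1b : Commute k'' ⁅v, v'⁆ := (hcomm k'' hk'' ⁅v, v'⁆ hc1V).symm
          have c2a : Commute v'' ⁅k, k'⁆ :=
            Subgroup.mem_centralizer_iff.mp hc2.2 v'' hv''
          have c2b : Commute k'' ⁅k, k'⁆ := (hcomm k'' hk'' ⁅k, k'⁆ hc2.1).symm
          exact ((c1a.mul_right c2a).mul_left (c1b.mul_right c2b)).eq
      -- contradiction with maximality
      have : M ≤ V := hVmax hMF le_sup_left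
      exact hK (le_sup_right.trans this)
    · -- limit case
      refine hαS ?_
      intro x hx
      have hx1 := hx.1
      rw [hlim α hL, iSup_subtype'] at hx1
      haveI hne : Nonempty {o' : Ordinal // o' < α} := ⟨⟨0, hL.pos⟩⟩
      have hdir : Directed (· ≤ ·) (fun i : {o' : Ordinal // o' < α} => s i.1) := by
        intro i j
        exact ⟨⟨max i.1 j.1, max_lt i.2 j.2⟩, hmono (le_max_left _ _), hmono (le_max_right _ _)⟩
      obtain ⟨i, hi⟩ := (Subgroup.mem_iSup_of_directed hdir).mp hx1
      exact hmin i.1 i.2 ⟨hi, hx.2⟩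
  -- conclusion
  refine ⟨V, hVchar, ?_, (inf_eq_right.mpr hDV).symm⟩
  -- class at most two
  have hcoe : ∀ x y : V, ((⁅x, y⁆ : V) : G) = ⁅(x : G), (y : G)⁆ := by
    intro x y
    simp [commutatorElement_def]
  have hcen : ∀ x y : V, ⁅x, y⁆ ∈ Subgroup.center V := by
    intro x y
    rw [Subgroup.mem_center_iff]
    intro z
    have h := Subgroup.mem_centralizer_iff.mp (hV2 x.1 x.2 y.1 y.2) z.1 z.2
    apply Subtype.ext
    rw [Subgroup.coe_mul, Subgroup.coe_mul, hcoe]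
    exact h
  have h1 : ⁅V, V⁆ ≤ Subgroup.centralizer (V : Set G) :=
    Subgroup.commutator_le.mpr fun x hx y hy => hV2 x hx y hy
  have h2 : ⁅Subgroup.centralizer (V : Set G), V⁆ = ⊥ :=
    Subgroup.commutator_eq_bot_iff_le_centralizer.mpr le_rfl
  show ⁅⁅V, V⁆, V⁆ = ⊥
  rw [← le_bot_iff, ← h2]
  exact Subgroup.commutator_mono h1 le_rfl
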